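/- Subcritical 3-colorability: For every constant c with 0 < c < 1, with p = c/n the probability that G(n,p) is 3-colorable tends to 1 as n → ∞. (Indeed, with high probability every connected component of G(n,c/n) contains at most one cycle, and such graphs are 3-colorable.) -/

import Mathlib

open Finset Filter

/-- The possible edges of a graph on `{1,…,n}`: the 2-element subsets. -/
abbrev GEdge (n : ℕ) := {s : Finset (Fin n) // s.card = 2}

open Classical in
/-- The probability that the Erdős–Rényi random graph `G(n,p)`, in which each of the
`binom(n,2)` possible edges is present independently with probability `p`, satisfies
the property `P` (a graph is identified with its set of edges). -/
noncomputable def gprob (n : ℕ) (p : ℝ) (P : Finset (GEdge n) → Prop) : ℝ :=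
  ∑ S : Finset (GEdge n),
    if P S then p ^ S.card * (1 - p) ^ (Fintype.card (GEdge n) - S.card) else 0

/-- The graph on `{1,…,n}` with edge set `S` is 3-colorable: there is a coloring of the
vertices with 3 colors in which no edge has both endpoints of the same color. -/
def ThreeColorable (n : ℕ) (S : Finset (GEdge n)) : Prop :=
  ∃ f : Fin n → Fin 3, ∀ e ∈ S, ∀ u ∈ e.val, ∀ v ∈ e.val, u ≠ v → f u ≠ f v

section Prob
variable {ι : Type*} [DecidableEq ι]

lemma sum_pow_card (u : Finset ι) (p q : ℝ) :
    ∑ B ∈ u.powerset, p ^ B.card * q ^ (u.card - B.card) = (p + q) ^ u.card := by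
  rw [← Finset.prod_const, Finset.prod_add]
  refine Finset.sum_congr rfl fun t ht => ?_
  rw [Finset.prod_const, Finset.prod_const, Finset.card_sdiff_of_subset (Finset.mem_powerset.1 ht)]

lemma sum_superset [Fintype ι] (A : Finset ι) (p q : ℝ) :
    ∑ S : Finset ι, (if A ⊆ S then p ^ S.card * q ^ (Fintype.card ι - S.card) else 0)
      = p ^ A.card * (p + q) ^ (Fintype.card ι - A.card) := by
  classical
  rw [← Finset.sum_filter]
  have hbij : ∑ S ∈ Finset.univ.filter (fun S : Finset ι => A ⊆ S),
      p ^ S.card * q ^ (Fintype.card ι - S.card)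
      = ∑ B ∈ (Finset.univ \ A).powerset,
        p ^ (A.card + B.card) * q ^ (Fintype.card ι - (A.card + B.card)) := by
    refine Finset.sum_nbij' (fun S => S \ A) (fun B => A ∪ B) ?_ ?_ ?_ ?_ ?_
    · intro S hS
      simp only [Finset.mem_filter] at hS
      exact Finset.mem_powerset.2 (Finset.sdiff_subset_sdiff (Finset.subset_univ S) le_rfl)
    · intro B hB
      simp only [Finset.mem_filter, Finset.mem_univ, true_and]
      exact Finset.subset_union_left
    · intro S hS
      simp only [Finset.mem_filter] at hS
      exact Finset.union_sdiff_of_subset hS.2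
    · intro B hB
      have hd : Disjoint A B := by
        rw [Finset.mem_powerset] at hB
        exact Finset.disjoint_left.2 fun x hxA hxB => by
          have := hB hxB; simp at this; exact this hxA
      show (A ∪ B) \ A = B
      rw [Finset.union_sdiff_cancel_left hd]
    · intro S hS
      simp only [Finset.mem_filter] at hS
      have : S.card = A.card + (S \ A).card := by
        rw [Finset.card_sdiff_of_subset hS.2]
        have := Finset.card_le_card hS.2
        omega
      rw [← this]
  rw [hbij]
  have hA : A.card ≤ Fintype.card ι := by
    simpa using Finset.card_le_card (Finset.subset_univ A)
  have huA : (Finset.univ \ A).card = Fintype.card ι - A.card := by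
    rw [Finset.card_sdiff_of_subset (Finset.subset_univ A)]; simp
  have : ∀ B ∈ (Finset.univ \ A).powerset,
      p ^ (A.card + B.card) * q ^ (Fintype.card ι - (A.card + B.card))
      = p ^ A.card * (p ^ B.card * q ^ ((Finset.univ \ A).card - B.card)) := by
    intro B hB
    have hBc : B.card ≤ (Finset.univ \ A).card := Finset.card_le_card (Finset.mem_powerset.1 hB)
    have he : Fintype.card ι - (A.card + B.card) = (Finset.univ \ A).card - B.card := by
      rw [huA]; omega
    rw [pow_add, he, mul_assoc]
  rw [Finset.sum_congr rfl this, ← Finset.mul_sum, sum_pow_card, huA]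

end Prob

lemma gprob_add_compl (n : ℕ) (p : ℝ) (P : Finset (GEdge n) → Prop) :
    gprob n p P + gprob n p (fun S => ¬ P S) = 1 := by
  classical
  rw [gprob, gprob, ← Finset.sum_add_distrib]
  have key : ∀ (A : Prop) [Decidable A] [Decidable (¬ A)] (x : ℝ),
      (if A then x else 0) + (if ¬ A then x else 0) = x := by
    intro A _ _ x; by_cases h : A <;> simp [h]
  simp only [key]
  have h3 := sum_superset (ι := GEdge n) ∅ p (1 - p)
  simpa using h3

lemma gprob_ge_zero (n : ℕ) (p : ℝ) (hp0 : 0 ≤ p) (hp1 : p ≤ 1) (P : Finset (GEdge n) → Prop) :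
    0 ≤ gprob n p P := by
  classical
  refine Finset.sum_nonneg fun S _ => ?_
  split
  · exact mul_nonneg (pow_nonneg hp0 _) (pow_nonneg (by linarith) _)
  · exact le_refl 0

lemma gprob_union_bound {n : ℕ} {α : Type*} (p : ℝ) (hp0 : 0 ≤ p) (hp1 : p ≤ 1)
    (P : Finset (GEdge n) → Prop) (D : Finset α) (W : α → Finset (GEdge n))
    (hcov : ∀ S, P S → ∃ x ∈ D, W x ⊆ S) :
    gprob n p P ≤ ∑ x ∈ D, p ^ (W x).card := by
  classical
  have hw : ∀ S : Finset (GEdge n),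
      0 ≤ p ^ S.card * (1 - p) ^ (Fintype.card (GEdge n) - S.card) := fun S =>
    mul_nonneg (pow_nonneg hp0 _) (pow_nonneg (by linarith) _)
  calc gprob n p P
      ≤ ∑ S : Finset (GEdge n), ∑ x ∈ D,
          (if W x ⊆ S then p ^ S.card * (1 - p) ^ (Fintype.card (GEdge n) - S.card) else 0) := by
        refine Finset.sum_le_sum fun S _ => ?_
        have hnn : ∀ x : α,
            0 ≤ (if W x ⊆ S then p ^ S.card * (1 - p) ^ (Fintype.card (GEdge n) - S.card)
              else 0) := by
          intro x; split; exacts [hw S, le_rfl]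
        by_cases h : P S
        · simp only [if_pos h]
          obtain ⟨x₀, hx₀D, hx₀⟩ := hcov S h
          refine Finset.single_le_sum (f := fun x =>
            (if W x ⊆ S then p ^ S.card * (1 - p) ^ (Fintype.card (GEdge n) - S.card) else 0))
            (fun x _ => hnn x) hx₀D |>.trans_eq' ?_
          rw [if_pos hx₀]
        · simp only [if_neg h]
          exact Finset.sum_nonneg fun x _ => hnn x
    _ = ∑ x ∈ D, ∑ S : Finset (GEdge n),
          (if W x ⊆ S then p ^ S.card * (1 - p) ^ (Fintype.card (GEdge n) - S.card) else 0) :=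
        Finset.sum_comm
    _ = ∑ x ∈ D, p ^ (W x).card := by
        refine Finset.sum_congr rfl fun x _ => ?_
        rw [sum_superset]
        simp

open Classical in
lemma colorable_of_degenerate {n : ℕ} (m : ℕ) (S : Finset (GEdge n)) (hm : S.card ≤ m)
    (h : ∀ T ⊆ S, T.Nonempty → ∃ u, (∃ e ∈ T, u ∈ e.val) ∧
      (T.filter (fun e => u ∈ e.val)).card ≤ 2) :
    ThreeColorable n S := by
  classical
  induction m generalizing S with
  | zero =>
    have : S = ∅ := Finset.card_eq_zero.1 (Nat.le_zero.1 hm)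
    subst this
    exact ⟨fun _ => 0, fun e he => absurd he (Finset.notMem_empty e)⟩
  | succ m ih =>
    rcases Finset.eq_empty_or_nonempty S with hS | hS
    · subst hS
      exact ⟨fun _ => 0, fun e he => absurd he (Finset.notMem_empty e)⟩
    obtain ⟨u, ⟨e₀, he₀S, he₀u⟩, hdeg⟩ := h S le_rfl hS
    set S' := S.filter (fun e => u ∉ e.val) with hS'
    have hsub : S' ⊆ S := Finset.filter_subset _ _
    have hlt : S'.card < S.card := by
      refine Finset.card_lt_card ⟨hsub, fun hSS' => ?_⟩
      have := hSS' he₀S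
      rw [hS', Finset.mem_filter] at this
      exact this.2 he₀u
    obtain ⟨f, hf⟩ := ih S' (by omega) (fun T hT hTne => h T (hT.trans hsub) hTne)
    -- neighbors of u
    set Nb := (S.filter (fun e => u ∈ e.val)).biUnion (fun e => e.val.erase u) with hNb
    have hNbcard : Nb.card ≤ 2 := by
      calc Nb.card ≤ ∑ e ∈ S.filter (fun e => u ∈ e.val), (e.val.erase u).card :=
            Finset.card_biUnion_le
        _ ≤ ∑ _e ∈ S.filter (fun e => u ∈ e.val), 1 := by
            refine Finset.sum_le_sum fun e he => ?_
            have : (e.val.erase u).card = 1 := by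
              rw [Finset.card_erase_of_mem (Finset.mem_filter.1 he).2, e.2]
            omega
        _ = (S.filter (fun e => u ∈ e.val)).card := by simp
        _ ≤ 2 := hdeg
    have himg : (Nb.image f).card < 3 :=
      lt_of_le_of_lt (Finset.card_image_le.trans hNbcard) (by norm_num)
    have hcol : ∃ col : Fin 3, col ∉ Nb.image f := by
      by_contra hcon
      push_neg at hcon
      have : (Finset.univ : Finset (Fin 3)) ⊆ Nb.image f := fun x _ => hcon x
      have := Finset.card_le_card this
      simp at this
      omega
    obtain ⟨col, hcol⟩ := hcol
    refine ⟨Function.update f u col, ?_⟩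
    intro e he x hx y hy hxy
    by_cases hue : u ∈ e.val
    · -- e touches u
      have hother : ∀ w ∈ e.val, w ≠ u → f w ∈ Nb.image f := by
        intro w hw hwu
        refine Finset.mem_image_of_mem f ?_
        exact Finset.mem_biUnion.2 ⟨e, Finset.mem_filter.2 ⟨he, hue⟩, Finset.mem_erase.2 ⟨hwu, hw⟩⟩
      have hcard1 : (e.val.erase u).card = 1 := by
        rw [Finset.card_erase_of_mem hue, e.2]
      by_cases hxu : x = u
      · have hyu : y ≠ u := fun hyu => hxy (hxu.trans hyu.symm)
        rw [hxu, Function.update_self, Function.update_of_ne hyu]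
        intro hcc
        exact hcol (hcc ▸ hother y hy hyu)
      · by_cases hyu : y = u
        · rw [hyu, Function.update_self, Function.update_of_ne hxu]
          intro hcc
          exact hcol (hcc.symm ▸ hother x hx hxu)
        · exfalso
          have hx' : x ∈ e.val.erase u := Finset.mem_erase.2 ⟨hxu, hx⟩
          have hy' : y ∈ e.val.erase u := Finset.mem_erase.2 ⟨hyu, hy⟩
          have := Finset.card_le_one.1 (le_of_eq hcard1) _ hx' _ hy'
          exact hxy this
    · -- e avoids u
      have he' : e ∈ S' := Finset.mem_filter.2 ⟨he, hue⟩
      have hxu : x ≠ u := fun hh => hue (hh ▸ hx)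
      have hyu : y ≠ u := fun hh => hue (hh ▸ hy)
      rw [Function.update_of_ne hxu, Function.update_of_ne hyu]
      exact hf e he' x hx y hy hxy

open Classical in
lemma exists_theta {n : ℕ} (T : Finset (GEdge n)) (hne : T.Nonempty)
    (hdeg : ∀ u : Fin n, (∃ e ∈ T, u ∈ e.val) → 3 ≤ (T.filter (fun e => u ∈ e.val)).card) :
    ∃ (v i : ℕ) (a : ℕ → Fin n), 4 ≤ v ∧ v ≤ n ∧ 2 ≤ i ∧ i + 2 ≤ v ∧
      (∀ j k, j < v → k < v → a j = a k → j = k) ∧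
      (∀ j, j + 1 < v → ∃ e ∈ T, e.val = {a j, a (j+1)}) ∧
      (∃ e ∈ T, e.val = {a (v-1), a 0}) ∧
      (∃ e ∈ T, e.val = {a 0, a i}) := by
  classical
  set Q : ℕ → (ℕ → Fin n) → Prop := fun k a =>
    (∀ j l, j < k → l < k → a j = a l → j = l) ∧
    (∀ j, j + 1 < k → ∃ e ∈ T, e.val = {a j, a (j+1)}) with hQ
  set P : ℕ → Prop := fun k => ∃ a, Q k a with hP
  -- a first edge
  obtain ⟨e₀, he₀⟩ := hne
  obtain ⟨x, y, hxy, hval⟩ := Finset.card_eq_two.1 e₀.2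
  have h2n : 2 ≤ n := by
    by_contra hcon
    push_neg at hcon
    have hx := x.2
    have hy := y.2
    exact hxy (Fin.ext (by omega))
  -- paths are injectively indexed, so bounded by n
  have hPn : ∀ (m : ℕ) (a' : ℕ → Fin n), (∀ j l, j < m → l < m → a' j = a' l → j = l) → m ≤ n := by
    intro m a' hinj
    have := Finset.card_le_card_of_injOn (fun j => a' j)
      (fun j _ => Finset.mem_univ (a' j))
      (fun j hj l hl hjl => hinj j l (Finset.mem_coe.1 hj |> Finset.mem_range.1)
        (Finset.mem_coe.1 hl |> Finset.mem_range.1) hjl)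
      (s := Finset.range m) (t := Finset.univ)
    simpa using this
  have hP2 : P 2 := by
    refine ⟨fun j => if j = 0 then x else y, ?_, ?_⟩
    · intro j l hj hl hjl
      interval_cases j <;> interval_cases l <;> simp_all
    · intro j hj
      have : j = 0 := by omega
      subst this
      exact ⟨e₀, he₀, by simpa using hval⟩
  set k := Nat.findGreatest P n with hk
  have hk2 : 2 ≤ k := Nat.le_findGreatest h2n hP2
  have hkn : k ≤ n := Nat.findGreatest_le n
  obtain ⟨a, ha⟩ : P k := Nat.findGreatest_spec h2n hP2
  have hmax : ∀ a' : ℕ → Fin n, ¬ Q (k+1) a' := by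
    intro a' hq
    have hkn' : k + 1 ≤ n := hPn (k+1) a' hq.1
    exact Nat.findGreatest_is_greatest (lt_add_one k) hkn' ⟨a', hq⟩
  -- the head a 0 and its incident edges
  have hhead : ∃ e ∈ T, a 0 ∈ e.val := by
    obtain ⟨e, he, hev⟩ := ha.2 0 (by omega)
    exact ⟨e, he, by rw [hev]; exact Finset.mem_insert_self _ _⟩
  set I := T.filter (fun e => a 0 ∈ e.val) with hI
  have hIcard : 3 ≤ I.card := hdeg (a 0) hhead
  set oth : GEdge n → Fin n := fun e =>
    if h : (e.val.erase (a 0)).Nonempty then h.choose else a 0 with hoth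
  have hothspec : ∀ e ∈ I, e.val = {a 0, oth e} ∧ oth e ≠ a 0 := by
    intro e he
    obtain ⟨heT, hea⟩ := Finset.mem_filter.1 he
    have hcard1 : (e.val.erase (a 0)).card = 1 := by
      rw [Finset.card_erase_of_mem hea, e.2]
    have hne' : (e.val.erase (a 0)).Nonempty := Finset.card_pos.1 (by omega)
    have hothe : oth e = hne'.choose := by rw [hoth]; simp [dif_pos hne']
    have hmem : oth e ∈ e.val.erase (a 0) := hothe ▸ hne'.choose_spec
    have hne0 : oth e ≠ a 0 := (Finset.mem_erase.1 hmem).1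
    obtain ⟨z, hz⟩ := Finset.card_eq_one.1 hcard1
    have : oth e = z := by rw [hz] at hmem; simpa using hmem
    subst this
    constructor
    · rw [← Finset.insert_erase hea, hz]
    · exact hne0
  have hothinj : Set.InjOn oth ↑I := by
    intro e he e' he' hee
    have h1 := hothspec e he
    have h2 := hothspec e' he'
    exact Subtype.ext (by rw [h1.1, h2.1, hee])
  set N' := I.image oth with hN'
  have hN'card : 3 ≤ N'.card := by
    rw [hN', Finset.card_image_of_injOn hothinj]; exact hIcard
  have hN'edge : ∀ w ∈ N', w ≠ a 0 ∧ ∃ e ∈ T, e.val = {a 0, w} := by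
    intro w hw
    obtain ⟨e, he, hwe⟩ := Finset.mem_image.1 hw
    obtain ⟨hev, hne0⟩ := hothspec e he
    subst hwe
    exact ⟨hne0, e, (Finset.mem_filter.1 he).1, hev⟩
  -- every element of N' appears on the path
  have hidx : ∀ w ∈ N', ∃ j, 1 ≤ j ∧ j < k ∧ a j = w := by
    intro w hw
    by_contra hcon
    push_neg at hcon
    have hno : ∀ j, j < k → a j ≠ w := by
      intro j hj
      rcases Nat.eq_zero_or_pos j with h0 | h1
      · subst h0; exact fun hh => (hN'edge w hw).1 hh.symm
      · exact fun hh => (hcon j h1 hj) hh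
    refine hmax (fun j => if j = 0 then w else a (j-1)) ⟨?_, ?_⟩
    · intro j l hj hl hjl
      simp only at hjl
      by_cases hj0 : j = 0 <;> by_cases hl0 : l = 0
      · omega
      · exfalso
        rw [if_pos hj0, if_neg hl0] at hjl
        exact hno (l-1) (by omega) hjl.symm
      · exfalso
        rw [if_neg hj0, if_pos hl0] at hjl
        exact hno (j-1) (by omega) hjl
      · rw [if_neg hj0, if_neg hl0] at hjl
        have := ha.1 (j-1) (l-1) (by omega) (by omega) hjl
        omega
    · intro j hj
      by_cases hj0 : j = 0
      · subst hj0
        obtain ⟨_, e, heT, hev⟩ := hN'edge w hw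
        refine ⟨e, heT, ?_⟩
        simp only [if_pos rfl, if_neg one_ne_zero]
        rw [hev]
        exact Finset.pair_comm _ _
      · obtain ⟨e, heT, hev⟩ := ha.2 (j-1) (by omega)
        refine ⟨e, heT, ?_⟩
        simp only [if_neg hj0, if_neg (by omega : j + 1 ≠ 0)]
        have : j + 1 - 1 = (j-1) + 1 := by omega
        rw [this, hev]
  -- indices of neighbors
  set J := (Finset.Ico 1 k).filter (fun j => a j ∈ N') with hJ
  have hJcard : 3 ≤ J.card := by
    have hsub : N' ⊆ J.image a := by
      intro w hw
      obtain ⟨j, hj1, hjk, hjw⟩ := hidx w hw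
      exact Finset.mem_image.2 ⟨j, Finset.mem_filter.2
        ⟨Finset.mem_Ico.2 ⟨hj1, hjk⟩, hjw ▸ hw⟩, hjw⟩
    calc 3 ≤ N'.card := hN'card
      _ ≤ (J.image a).card := Finset.card_le_card hsub
      _ ≤ J.card := Finset.card_image_le
  have hJmem : ∀ j ∈ J, 1 ≤ j ∧ j < k ∧ a j ∈ N' := by
    intro j hj
    obtain ⟨hji, hjN⟩ := Finset.mem_filter.1 hj
    exact ⟨(Finset.mem_Ico.1 hji).1, (Finset.mem_Ico.1 hji).2, hjN⟩
  -- three indices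
  have hJne : J.Nonempty := Finset.card_pos.1 (by omega)
  set i₃ := J.max' hJne with hi₃
  have hi₃J : i₃ ∈ J := J.max'_mem hJne
  have hJ2ne : (J.erase i₃).Nonempty := Finset.card_pos.1 (by
    rw [Finset.card_erase_of_mem hi₃J]; omega)
  set i₂ := (J.erase i₃).max' hJ2ne with hi₂
  have hi₂J' : i₂ ∈ J.erase i₃ := (J.erase i₃).max'_mem hJ2ne
  have hi₂J : i₂ ∈ J := Finset.mem_of_mem_erase hi₂J'
  have hi₂lt : i₂ < i₃ :=
    lt_of_le_of_ne (J.le_max' i₂ hi₂J) (Finset.mem_erase.1 hi₂J').1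
  have hJ3ne : ((J.erase i₃).erase i₂).Nonempty := Finset.card_pos.1 (by
    rw [Finset.card_erase_of_mem hi₂J', Finset.card_erase_of_mem hi₃J]; omega)
  obtain ⟨i₁, hi₁⟩ := hJ3ne
  have hi₁J' : i₁ ∈ J.erase i₃ := Finset.mem_of_mem_erase hi₁
  have hi₁J : i₁ ∈ J := Finset.mem_of_mem_erase hi₁J'
  have hi₁lt : i₁ < i₂ :=
    lt_of_le_of_ne ((J.erase i₃).le_max' i₁ hi₁J') (Finset.mem_erase.1 hi₁).1
  have h1i₁ : 1 ≤ i₁ := (hJmem i₁ hi₁J).1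
  have hi₃k : i₃ < k := (hJmem i₃ hi₃J).2.1
  -- assemble the witness
  refine ⟨i₃ + 1, i₂, a, by omega, by omega, by omega, by omega, ?_, ?_, ?_, ?_⟩
  · intro j l hj hl hjl
    exact ha.1 j l (by omega) (by omega) hjl
  · intro j hj
    exact ha.2 j (by omega)
  · obtain ⟨e, heT, hev⟩ := (hN'edge _ (hJmem i₃ hi₃J).2.2).2
    refine ⟨e, heT, ?_⟩
    simp only [Nat.add_sub_cancel]
    rw [hev]
    exact Finset.pair_comm _ _
  · exact (hN'edge _ (hJmem i₂ hi₂J).2.2).2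

def avtx (n : ℕ) (b : Fin n → Fin n) (j : ℕ) : Finset (Fin n) :=
  if h : j < n then {b ⟨j, h⟩} else ∅

def pairAt (n v i : ℕ) (b : Fin n → Fin n) (k : ℕ) : Finset (Fin n) :=
  if k + 2 ≤ v then avtx n b k ∪ avtx n b (k+1)
  else if k = v - 1 then avtx n b (v-1) ∪ avtx n b 0
  else avtx n b 0 ∪ avtx n b i

def Valid (n : ℕ) (x : ℕ × ℕ × (Fin n → Fin n)) : Prop :=
  4 ≤ x.1 ∧ x.1 ≤ n ∧ 2 ≤ x.2.1 ∧ x.2.1 + 2 ≤ x.1 ∧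
  (∀ j l : Fin n, (j:ℕ) < x.1 → (l:ℕ) < x.1 → x.2.2 j = x.2.2 l → j = l) ∧
  (∀ j : Fin n, x.1 ≤ (j:ℕ) → ∀ j0 : Fin n, (j0:ℕ) = 0 → x.2.2 j = x.2.2 j0)

def cFn (n : ℕ) (hn : 0 < n) (b : Fin n → Fin n) (j : ℕ) : Fin n :=
  b ⟨j % n, Nat.mod_lt j hn⟩

open Classical in
noncomputable def Wfun (n : ℕ) (x : ℕ × ℕ × (Fin n → Fin n)) : Finset (GEdge n) :=
  Finset.univ.filter (fun e => ∃ k ≤ x.1, e.val = pairAt n x.1 x.2.1 x.2.2 k)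

lemma avtx_c {n : ℕ} (hn : 0 < n) (b : Fin n → Fin n) {j : ℕ} (h : j < n) :
    avtx n b j = {cFn n hn b j} := by
  rw [avtx, dif_pos h, cFn]
  congr 2
  exact Fin.ext (by simp [Nat.mod_eq_of_lt h])

lemma pairAt_cases {n v i : ℕ} (b : Fin n → Fin n) (hn : 0 < n)
    (h4 : 4 ≤ v) (hvn : v ≤ n) (hi2 : 2 ≤ i) (hiv : i + 2 ≤ v) {k : ℕ} (hk : k ≤ v) :
    (k + 2 ≤ v ∧ pairAt n v i b k = {cFn n hn b k, cFn n hn b (k+1)}) ∨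
    (k = v - 1 ∧ pairAt n v i b k = {cFn n hn b (v-1), cFn n hn b 0}) ∨
    (k = v ∧ pairAt n v i b k = {cFn n hn b 0, cFn n hn b i}) := by
  by_cases h1 : k + 2 ≤ v
  · left
    refine ⟨h1, ?_⟩
    rw [pairAt, if_pos h1, avtx_c hn b (by omega), avtx_c hn b (by omega)]
    rfl
  · by_cases h2 : k = v - 1
    · right; left
      refine ⟨h2, ?_⟩
      rw [pairAt, if_neg h1, if_pos h2, avtx_c hn b (by omega), avtx_c hn b (by omega)]
      rfl
    · right; right
      refine ⟨by omega, ?_⟩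
      rw [pairAt, if_neg h1, if_neg h2, avtx_c hn b (by omega), avtx_c hn b (by omega)]
      rfl

lemma valid_facts {n v i : ℕ} {b : Fin n → Fin n} (h : Valid n (v, i, b)) :
    0 < n ∧ 4 ≤ v ∧ v ≤ n ∧ 2 ≤ i ∧ i + 2 ≤ v := by
  obtain ⟨h4, hvn, hi2, hiv, _, _⟩ := h
  exact ⟨by omega, h4, hvn, hi2, hiv⟩

lemma cFn_inj {n v i : ℕ} {b : Fin n → Fin n} (h : Valid n (v, i, b)) (hn : 0 < n)
    {j l : ℕ} (hj : j < v) (hl : l < v) (hjl : cFn n hn b j = cFn n hn b l) : j = l := by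
  obtain ⟨_, hvn, _, _, hinj, _⟩ := h
  have hjn : j < n := lt_of_lt_of_le hj hvn
  have hln : l < n := lt_of_lt_of_le hl hvn
  have := hinj ⟨j % n, Nat.mod_lt j hn⟩ ⟨l % n, Nat.mod_lt l hn⟩
    (by simp [Nat.mod_eq_of_lt hjn]; omega) (by simp [Nat.mod_eq_of_lt hln]; omega) hjl
  have := Fin.val_eq_val _ _ |>.2 this
  simp [Nat.mod_eq_of_lt hjn, Nat.mod_eq_of_lt hln] at this
  exact this

lemma pair_index {n v i : ℕ} {b : Fin n → Fin n} (h : Valid n (v, i, b)) (hn : 0 < n)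
    {x y z w : ℕ} (hx : x < v) (hy : y < v) (hz : z < v) (hw : w < v)
    (heq : ({cFn n hn b x, cFn n hn b y} : Finset (Fin n)) = {cFn n hn b z, cFn n hn b w}) :
    (x = z ∧ y = w) ∨ (x = w ∧ y = z) := by
  have hxm : cFn n hn b x = cFn n hn b z ∨ cFn n hn b x = cFn n hn b w := by
    have : cFn n hn b x ∈ ({cFn n hn b z, cFn n hn b w} : Finset (Fin n)) := by
      rw [← heq]; exact Finset.mem_insert_self _ _
    simpa using this
  have hym : cFn n hn b y = cFn n hn b z ∨ cFn n hn b y = cFn n hn b w := by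
    have : cFn n hn b y ∈ ({cFn n hn b z, cFn n hn b w} : Finset (Fin n)) := by
      rw [← heq]; exact Finset.mem_insert.2 (Or.inr (Finset.mem_singleton_self _))
    simpa using this
  have hwm : cFn n hn b w = cFn n hn b x ∨ cFn n hn b w = cFn n hn b y := by
    have : cFn n hn b w ∈ ({cFn n hn b x, cFn n hn b y} : Finset (Fin n)) := by
      rw [heq]; exact Finset.mem_insert.2 (Or.inr (Finset.mem_singleton_self _))
    simpa using this
  have hzm : cFn n hn b z = cFn n hn b x ∨ cFn n hn b z = cFn n hn b y := by
    have : cFn n hn b z ∈ ({cFn n hn b x, cFn n hn b y} : Finset (Fin n)) := by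
      rw [heq]; exact Finset.mem_insert_self _ _
    simpa using this
  rcases hxm with h1 | h1 <;> rcases hym with h2 | h2
  · -- x = z, y = z
    have hxz := cFn_inj h hn hx hz h1
    have hyz := cFn_inj h hn hy hz h2
    rcases hwm with h3 | h3
    · have := cFn_inj h hn hw hx h3
      omega
    · have := cFn_inj h hn hw hy h3
      omega
  · exact Or.inl ⟨cFn_inj h hn hx hz h1, cFn_inj h hn hy hw h2⟩
  · exact Or.inr ⟨cFn_inj h hn hx hw h1, cFn_inj h hn hy hz h2⟩
  · -- x = w, y = w
    have hxw := cFn_inj h hn hx hw h1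
    have hyw := cFn_inj h hn hy hw h2
    rcases hzm with h3 | h3
    · have := cFn_inj h hn hz hx h3
      omega
    · have := cFn_inj h hn hz hy h3
      omega

lemma pairAt_injOn {n v i : ℕ} {b : Fin n → Fin n} (h : Valid n (v, i, b)) (hn : 0 < n)
    {k l : ℕ} (hk : k ≤ v) (hl : l ≤ v)
    (heq : pairAt n v i b k = pairAt n v i b l) : k = l := by
  obtain ⟨_, h4, hvn, hi2, hiv⟩ := valid_facts h
  rcases pairAt_cases b hn h4 hvn hi2 hiv hk with ⟨hc1, he1⟩ | ⟨hc1, he1⟩ | ⟨hc1, he1⟩ <;>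
    rcases pairAt_cases b hn h4 hvn hi2 hiv hl with ⟨hc2, he2⟩ | ⟨hc2, he2⟩ | ⟨hc2, he2⟩ <;>
      rw [he1, he2] at heq
  · rcases pair_index h hn (by omega) (by omega) (by omega) (by omega) heq with ⟨_,_⟩|⟨_,_⟩ <;>
      omega
  · rcases pair_index h hn (by omega) (by omega) (by omega) (by omega) heq with ⟨_,_⟩|⟨_,_⟩ <;>
      omega
  · rcases pair_index h hn (by omega) (by omega) (by omega) (by omega) heq with ⟨_,_⟩|⟨_,_⟩ <;>
      omega
  · rcases pair_index h hn (by omega) (by omega) (by omega) (by omega) heq with ⟨_,_⟩|⟨_,_⟩ <;>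
      omega
  · omega
  · rcases pair_index h hn (by omega) (by omega) (by omega) (by omega) heq with ⟨_,_⟩|⟨_,_⟩ <;>
      omega
  · rcases pair_index h hn (by omega) (by omega) (by omega) (by omega) heq with ⟨_,_⟩|⟨_,_⟩ <;>
      omega
  · rcases pair_index h hn (by omega) (by omega) (by omega) (by omega) heq with ⟨_,_⟩|⟨_,_⟩ <;>
      omega
  · omega

lemma pairAt_card {n v i : ℕ} {b : Fin n → Fin n} (h : Valid n (v, i, b)) (hn : 0 < n)
    {k : ℕ} (hk : k ≤ v) : (pairAt n v i b k).card = 2 := by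
  obtain ⟨_, h4, hvn, hi2, hiv⟩ := valid_facts h
  rcases pairAt_cases b hn h4 hvn hi2 hiv hk with ⟨hc, he⟩ | ⟨hc, he⟩ | ⟨hc, he⟩ <;> rw [he] <;>
    refine Finset.card_pair (fun hcc => ?_)
  · have := cFn_inj h hn (by omega) (by omega) hcc; omega
  · have := cFn_inj h hn (by omega) (by omega) hcc; omega
  · have := cFn_inj h hn (by omega) (by omega) hcc; omega

lemma Wfun_card {n : ℕ} {v i : ℕ} {b : Fin n → Fin n} (h : Valid n (v, i, b)) :
    v + 1 ≤ (Wfun n (v, i, b)).card := by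
  classical
  obtain ⟨hn, h4, hvn, hi2, hiv⟩ := valid_facts h
  have hjunk : ((pairAt n v i b 0)).card = 2 := pairAt_card h hn (by omega)
  set f : ℕ → GEdge n := fun k =>
    if hc : (pairAt n v i b k).card = 2 then ⟨pairAt n v i b k, hc⟩
    else ⟨pairAt n v i b 0, hjunk⟩ with hf
  have hval : ∀ k ≤ v, (f k).val = pairAt n v i b k := by
    intro k hk
    rw [hf]
    simp only [dif_pos (pairAt_card h hn hk)]
  have := Finset.card_le_card_of_injOn f
    (fun k hk => by
      rw [Finset.mem_coe, Finset.mem_range] at hk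
      refine Finset.mem_filter.2 ⟨Finset.mem_univ _, ⟨k, by omega, (hval k (by omega)).symm ▸ rfl⟩⟩)
    (fun k hk l hl hkl => by
      rw [Finset.mem_coe, Finset.mem_range] at hk hl
      exact pairAt_injOn h hn (by omega) (by omega)
        (by rw [← hval k (by omega), ← hval l (by omega), hkl]))
    (s := Finset.range (v+1)) (t := Wfun n (v, i, b))
  simpa using this

open Classical in
lemma cardValidB {n : ℕ} (v i : ℕ) :
    ((Finset.univ : Finset (Fin n → Fin n)).filter (fun b => Valid n (v, i, b))).card ≤ n ^ v := by
  classical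
  rcases Finset.eq_empty_or_nonempty
    ((Finset.univ : Finset (Fin n → Fin n)).filter (fun b => Valid n (v, i, b))) with he | hne
  · rw [he]; simp
  · obtain ⟨b₀, hb₀⟩ := hne
    obtain ⟨hn, h4, hvn, _, _⟩ := valid_facts (Finset.mem_filter.1 hb₀).2
    have := Finset.card_le_card_of_injOn
      (s := (Finset.univ : Finset (Fin n → Fin n)).filter (fun b => Valid n (v, i, b)))
      (t := (Finset.univ : Finset (Fin v → Fin n)))
      (fun b : Fin n → Fin n => (fun k : Fin v => b ⟨(k : ℕ) % n, Nat.mod_lt _ hn⟩))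
      (fun (b : Fin n → Fin n) _ => Finset.mem_univ _)
      (fun (b : Fin n → Fin n) hb b' hb' hbb => by
        rw [Finset.mem_coe, Finset.mem_filter] at hb hb'
        obtain ⟨_, _, _, _, _, hcanon⟩ := hb.2
        obtain ⟨_, _, _, _, _, hcanon'⟩ := hb'.2
        funext j
        by_cases hj : (j : ℕ) < v
        · have := congrFun hbb ⟨(j : ℕ), hj⟩
          simpa [Nat.mod_eq_of_lt (lt_of_lt_of_le hj hvn), Fin.eta] using this
        · have hj0 : ((⟨0 % n, Nat.mod_lt _ hn⟩ : Fin n) : ℕ) = 0 := by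
            simp [Nat.mod_eq_of_lt hn]
          have h1 := hcanon j (by omega) _ hj0
          have h2 := hcanon' j (by omega) _ hj0
          have := congrFun hbb ⟨0, by omega⟩
          simp only at this
          exact h1.trans (this.trans h2.symm))
    simpa using this


open Classical in
lemma coverage {n : ℕ} (S : Finset (GEdge n)) (h : ¬ ThreeColorable n S) :
    ∃ x ∈ ((Finset.range (n+1)) ×ˢ ((Finset.range (n+1)) ×ˢ
        (Finset.univ : Finset (Fin n → Fin n)))).filter (Valid n),
      Wfun n x ⊆ S := by
  classical
  -- extract a min-degree-3 subgraph
  have hbad : ¬ (∀ T ⊆ S, T.Nonempty → ∃ u, (∃ e ∈ T, u ∈ e.val) ∧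
      (T.filter (fun e => u ∈ e.val)).card ≤ 2) := by
    intro hgood
    exact h (colorable_of_degenerate S.card S le_rfl hgood)
  push_neg at hbad
  obtain ⟨T, hTS, hTne, hTdeg⟩ := hbad
  have hdeg3 : ∀ u : Fin n, (∃ e ∈ T, u ∈ e.val) → 3 ≤ (T.filter (fun e => u ∈ e.val)).card := by
    intro u hu
    have := hTdeg u hu
    omega
  obtain ⟨v, i, a, h4, hvn, hi2, hiv, hinj, hpath, hclose, hchord⟩ := exists_theta T hTne hdeg3
  have hn : 0 < n := by omega
  set b : Fin n → Fin n := fun j => if (j : ℕ) < v then a (j : ℕ) else a 0 with hb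
  have hvalid : Valid n (v, i, b) := by
    refine ⟨h4, hvn, hi2, hiv, ?_, ?_⟩
    · intro j l hj hl hjl
      simp only [hb] at hjl
      rw [if_pos hj, if_pos hl] at hjl
      exact Fin.ext (hinj _ _ hj hl hjl)
    · intro j hj j0 hj0
      simp only [hb]
      rw [if_neg (by omega), if_pos (by omega)]
      rw [hj0]
  have hcF : ∀ j : ℕ, j < v → cFn n hn b j = a j := by
    intro j hj
    have hjn : j < n := by omega
    rw [cFn]
    simp only [hb]
    rw [if_pos (by simpa [Nat.mod_eq_of_lt hjn] using hj)]
    congr 1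
    simp [Nat.mod_eq_of_lt hjn]
  refine ⟨(v, i, b), ?_, ?_⟩
  · refine Finset.mem_filter.2 ⟨?_, hvalid⟩
    refine Finset.mem_product.2 ⟨Finset.mem_range.2 (show v < n + 1 by omega), ?_⟩
    exact Finset.mem_product.2 ⟨Finset.mem_range.2 (show i < n + 1 by omega), Finset.mem_univ _⟩
  · intro e he
    obtain ⟨-, k, hk, hev⟩ := Finset.mem_filter.1 he
    rcases pairAt_cases b hn h4 hvn hi2 hiv hk with ⟨hc, hpe⟩ | ⟨hc, hpe⟩ | ⟨hc, hpe⟩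
    · obtain ⟨e', he'T, he'v⟩ := hpath k (by omega)
      have : e = e' := Subtype.ext (by
        rw [hev, hpe, hcF k (by omega), hcF (k+1) (by omega), he'v])
      exact hTS (this ▸ he'T)
    · obtain ⟨e', he'T, he'v⟩ := hclose
      have : e = e' := Subtype.ext (by
        rw [hev, hpe, hcF (v-1) (by omega), hcF 0 (by omega), he'v])
      exact hTS (this ▸ he'T)
    · obtain ⟨e', he'T, he'v⟩ := hchord
      have : e = e' := Subtype.ext (by
        rw [hev, hpe, hcF 0 (by omega), hcF i (by omega), he'v])
      exact hTS (this ▸ he'T)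


/-- Subcritical 3-colorability: for every constant `0 < c < 1`, with `p = c/n` the
probability that `G(n,p)` is 3-colorable tends to `1`. -/
theorem subcritical_three_colorability (c : ℝ) (hc0 : 0 < c) (hc1 : c < 1) :
    Tendsto (fun n : ℕ => gprob n (c / n) (ThreeColorable n)) atTop (nhds 1) := by
  classical
  have hsum : Summable (fun v : ℕ => ((v : ℝ) + 1) * c ^ v) := by
    have h1 : Summable (fun v : ℕ => (v : ℝ) ^ 1 * c ^ v) :=
      summable_pow_mul_geometric_of_norm_lt_one 1 (by rw [Real.norm_eq_abs]; rw [abs_lt]; constructor <;> linarith)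
    have h2 : Summable (fun v : ℕ => c ^ v) :=
      summable_geometric_of_lt_one hc0.le hc1
    have := h1.add h2
    refine this.congr fun v => ?_
    ring
  set K := ∑' v : ℕ, ((v : ℝ) + 1) * c ^ v with hK
  have hKnn : 0 ≤ K :=
    tsum_nonneg fun v => mul_nonneg (by positivity) (pow_nonneg hc0.le v)
  have main : ∀ n : ℕ, 1 ≤ n →
      1 - K / n ≤ gprob n (c / n) (ThreeColorable n) ∧
      gprob n (c / n) (ThreeColorable n) ≤ 1 := by
    intro n hn1
    set p : ℝ := c / n with hp
    have hnR : (0 : ℝ) < n := by exact_mod_cast hn1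
    have hp0 : 0 ≤ p := div_nonneg hc0.le hnR.le
    have hp1 : p ≤ 1 := by
      rw [hp, div_le_one hnR]
      have : (1 : ℝ) ≤ n := by exact_mod_cast hn1
      linarith
    set D := ((Finset.range (n+1)) ×ˢ ((Finset.range (n+1)) ×ˢ
        (Finset.univ : Finset (Fin n → Fin n)))).filter (Valid n) with hD
    have hub := gprob_union_bound (n := n) p hp0 hp1 (fun S => ¬ ThreeColorable n S)
      D (Wfun n) (fun S hS => coverage S hS)
    -- bound the sum
    have hb1 : ∑ x ∈ D, p ^ (Wfun n x).card ≤ ∑ x ∈ D, p ^ (x.1 + 1) := by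
      refine Finset.sum_le_sum fun x hx => ?_
      obtain ⟨v, i, b⟩ := x
      have hvalid : Valid n (v, i, b) := (Finset.mem_filter.1 hx).2
      exact pow_le_pow_of_le_one hp0 hp1 (Wfun_card hvalid)
    have hb2 : ∑ x ∈ D, p ^ (x.1 + 1)
        ≤ ∑ v ∈ Finset.range (n+1), ((v : ℝ) + 1) * ((n : ℝ) ^ v * p ^ (v+1)) := by
      rw [hD, Finset.sum_filter, Finset.sum_product]
      refine Finset.sum_le_sum fun v hv => ?_
      rw [Finset.sum_product]
      have hinner : ∀ i ∈ Finset.range (n+1),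
          (∑ b : Fin n → Fin n, if Valid n (v, i, b) then p ^ (v+1) else 0)
          ≤ (if i < v then ((n : ℝ) ^ v * p ^ (v+1)) else 0) := by
        intro i _
        rw [← Finset.sum_filter, Finset.sum_const, nsmul_eq_mul]
        by_cases hiv : i < v
        · rw [if_pos hiv]
          refine mul_le_mul_of_nonneg_right ?_ (pow_nonneg hp0 _)
          have := cardValidB (n := n) v i
          calc ((((Finset.univ : Finset (Fin n → Fin n)).filter
                (fun b => Valid n (v, i, b))).card : ℝ))
              ≤ ((n ^ v : ℕ) : ℝ) := by exact_mod_cast this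
            _ = (n : ℝ) ^ v := by push_cast; ring
        · rw [if_neg hiv]
          have hemp : ((Finset.univ : Finset (Fin n → Fin n)).filter
              (fun b => Valid n (v, i, b))) = ∅ := by
            refine Finset.filter_eq_empty_iff.2 fun b _ => ?_
            intro hval
            obtain ⟨_, _, _, hi2, hivv⟩ := valid_facts hval
            omega
          rw [hemp]
          simp
      calc (∑ i ∈ Finset.range (n+1), ∑ b : Fin n → Fin n,
              if Valid n (v, i, b) then p ^ (v+1) else 0)
          ≤ ∑ i ∈ Finset.range (n+1), (if i < v then ((n : ℝ) ^ v * p ^ (v+1)) else 0) :=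
            Finset.sum_le_sum hinner
        _ = ∑ i ∈ (Finset.range (n+1)).filter (· < v), ((n : ℝ) ^ v * p ^ (v+1)) :=
            (Finset.sum_filter _ _).symm
        _ ≤ ((v : ℝ) + 1) * ((n : ℝ) ^ v * p ^ (v+1)) := by
            rw [Finset.sum_const, nsmul_eq_mul]
            refine mul_le_mul_of_nonneg_right ?_
              (mul_nonneg (pow_nonneg hnR.le _) (pow_nonneg hp0 _))
            have hsubs : (Finset.range (n+1)).filter (· < v) ⊆ Finset.range v := by
              intro j hj
              exact Finset.mem_range.2 (Finset.mem_filter.1 hj).2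
            have := Finset.card_le_card hsubs
            rw [Finset.card_range] at this
            have : (((Finset.range (n+1)).filter (· < v)).card : ℝ) ≤ (v : ℝ) := by
              exact_mod_cast this
            linarith
    have hb3 : ∑ v ∈ Finset.range (n+1), ((v : ℝ) + 1) * ((n : ℝ) ^ v * p ^ (v+1)) ≤ K / n := by
      have hterm : ∀ v : ℕ, ((v : ℝ) + 1) * ((n : ℝ) ^ v * p ^ (v+1))
          = (((v : ℝ) + 1) * c ^ (v+1)) / n := by
        intro v
        rw [hp, div_pow]
        have hnne : (n : ℝ) ^ v ≠ 0 := pow_ne_zero _ hnR.ne'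
        field_simp
        ring
      calc ∑ v ∈ Finset.range (n+1), ((v : ℝ) + 1) * ((n : ℝ) ^ v * p ^ (v+1))
          = (∑ v ∈ Finset.range (n+1), ((v : ℝ) + 1) * c ^ (v+1)) / n := by
            rw [Finset.sum_div]
            exact Finset.sum_congr rfl fun v _ => hterm v
        _ ≤ K / n := by
            rw [div_le_div_iff_of_pos_right hnR]
            calc ∑ v ∈ Finset.range (n+1), ((v : ℝ) + 1) * c ^ (v+1)
                ≤ ∑ v ∈ Finset.range (n+1), ((v : ℝ) + 1) * c ^ v := by
                  refine Finset.sum_le_sum fun v _ => ?_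
                  refine mul_le_mul_of_nonneg_left ?_ (by positivity)
                  exact pow_le_pow_of_le_one hc0.le hc1.le (Nat.le_succ v)
              _ ≤ K := Summable.sum_le_tsum _ (fun v _ =>
                  mul_nonneg (by positivity) (pow_nonneg hc0.le v)) hsum
    have hfinal : gprob n p (fun S => ¬ ThreeColorable n S) ≤ K / n :=
      le_trans hub (le_trans hb1 (le_trans hb2 hb3))
    have hcompl := gprob_add_compl n p (ThreeColorable n)
    have hnn := gprob_ge_zero n p hp0 hp1 (fun S => ¬ ThreeColorable n S)
    constructor
    · linarith
    · linarith
  have h1 : Tendsto (fun n : ℕ => 1 - K / n) atTop (nhds 1) := by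
    have h0 := (tendsto_const_div_atTop_nhds_zero_nat K).const_sub 1
    simpa using h0
  refine tendsto_of_tendsto_of_tendsto_of_le_of_le' h1 tendsto_const_nhds ?_ ?_
  · filter_upwards [eventually_ge_atTop 1] with n hn
    exact (main n hn).1
  · filter_upwards [eventually_ge_atTop 1] with n hn
    exact (main n hn).2
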